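/- For u = (u_{k,l}) in the set X'(c) of upper unitriangular d×d matrices satisfying the Lusztig conditions (v_i := u_{d-i,i}^q − u_{d-i,i} ≠ 0 and F(u_i) − u_i = v_i u_{i+1} for 1 ≤ i ≤ d−1, where u_i denotes the (d+1−i)-th column), the Lusztig isomorphism L(u) = u·w_Δ·B, where w_Δ is the antidiagonal permutation matrix, corresponds under the identification X(c) ≅ Ω^{d-1} to the point with affine coordinates (u_{1,1},…,u_{d-1,1}); i.e., the inverse of L sends (x_0,…,x_{d-2}) ∈ Ω^{d-1} to the unique u ∈ X'(c) with last column (x_0,…,x_{d-2},1)^t. -/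

import Mathlib

open Polynomial

/-! ### Auxiliary definitions: the Lusztig polynomials -/

/-- The sequence of `q`-polynomials driving the Lusztig recursion: `P 0 = X` and
`P (k+1) = v_k⁻¹ • (P k ^ q - P k)` where `v_k = φ(eval (y (k+1)) (P k))`. -/
noncomputable def lusP {K : Type*} [Field K] (q : ℕ) (y : ℕ → K) : ℕ → K[X]
  | 0 => X
  | k + 1 =>
      C ((eval (y (k + 1)) (lusP q y k) ^ q - eval (y (k + 1)) (lusP q y k))⁻¹) *
        (lusP q y k ^ q - lusP q y k)

/-- The constants `v_k` of the Lusztig recursion. -/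
noncomputable def lusV {K : Type*} [Field K] (q : ℕ) (y : ℕ → K) (k : ℕ) : K :=
  eval (y (k + 1)) (lusP q y k) ^ q - eval (y (k + 1)) (lusP q y k)

lemma fin_mk_eq {d a b : ℕ} (ha : a < d) (hb : b < d) (h : a = b) :
    (⟨a, ha⟩ : Fin d) = ⟨b, hb⟩ := Fin.ext h

lemma lusP_succ_eval {K : Type*} [Field K] (q : ℕ) (y : ℕ → K) (k : ℕ) (t : K) :
    eval t (lusP q y (k + 1)) =
      (lusV q y k)⁻¹ * (eval t (lusP q y k) ^ q - eval t (lusP q y k)) := by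
  simp [lusP, lusV]

lemma lusP_diag {K : Type*} [Field K] (q : ℕ) (y : ℕ → K) (h0 : y 0 = 1) :
    ∀ k, (∀ j < k, lusV q y j ≠ 0) → eval (y k) (lusP q y k) = 1
  | 0, _ => by simp [lusP, h0]
  | k + 1, hv => by
      rw [lusP_succ_eval]
      have h : eval (y (k + 1)) (lusP q y k) ^ q - eval (y (k + 1)) (lusP q y k)
          = lusV q y k := rfl
      rw [h, inv_mul_cancel₀ (hv k (Nat.lt_succ_self k))]

lemma lusP_zero_of_lt {K : Type*} [Field K] (q : ℕ) (hq : q ≠ 0) (y : ℕ → K) (h0 : y 0 = 1) :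
    ∀ k, (∀ j < k, lusV q y j ≠ 0) → ∀ j < k, eval (y j) (lusP q y k) = 0
  | 0, _, j, hj => absurd hj (Nat.not_lt_zero j)
  | k + 1, hv, j, hj => by
      have hv' : ∀ j < k, lusV q y j ≠ 0 := fun j hj => hv j (hj.trans (Nat.lt_succ_self k))
      rw [lusP_succ_eval]
      rcases Nat.lt_succ_iff_lt_or_eq.mp hj with h | h
      · rw [lusP_zero_of_lt q hq y h0 k hv' j h, zero_pow hq, sub_zero, mul_zero]
      · subst h
        rw [lusP_diag q y h0 j hv', one_pow, sub_self, mul_zero]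

section CharLemmas

variable {K : Type*} [Field K] (p n : ℕ) [Fact p.Prime] [CharP K p]

lemma lusfix_exp_ne_zero : p ^ n ≠ 0 := pow_ne_zero _ (Fact.out : p.Prime).pos.ne'

lemma lusfix_sub {a b : K} (ha : a ^ p ^ n = a) (hb : b ^ p ^ n = b) :
    (a - b) ^ p ^ n = a - b := by rw [sub_pow_char_pow, ha, hb]

lemma lusfix_add {a b : K} (ha : a ^ p ^ n = a) (hb : b ^ p ^ n = b) :
    (a + b) ^ p ^ n = a + b := by rw [add_pow_char_pow, ha, hb]

lemma lusfix_mul {a b : K} (ha : a ^ p ^ n = a) (hb : b ^ p ^ n = b) :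
    (a * b) ^ p ^ n = a * b := by rw [mul_pow, ha, hb]

lemma lusfix_neg {a : K} (ha : a ^ p ^ n = a) : (-a) ^ p ^ n = -a := by
  have h := lusfix_sub p n (a := 0) (b := a)
    (by rw [zero_pow (lusfix_exp_ne_zero p n)]) ha
  simpa using h

lemma lusfix_sum {ι : Type*} (s : Finset ι) (f : ι → K)
    (h : ∀ i ∈ s, f i ^ p ^ n = f i) : (∑ i ∈ s, f i) ^ p ^ n = ∑ i ∈ s, f i := by
  rw [sum_pow_char_pow]
  exact Finset.sum_congr rfl h

lemma lusP_add (y : ℕ → K) :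
    ∀ k, ∀ s t : K,
      eval (s + t) (lusP (p ^ n) y k) =
        eval s (lusP (p ^ n) y k) + eval t (lusP (p ^ n) y k)
  | 0, s, t => by simp [lusP]
  | k + 1, s, t => by
      rw [lusP_succ_eval, lusP_succ_eval, lusP_succ_eval, lusP_add y k s t,
        add_pow_char_pow]
      ring

lemma lusP_smul (y : ℕ → K) (a : K) (ha : a ^ p ^ n = a) :
    ∀ k, ∀ s : K, eval (a * s) (lusP (p ^ n) y k) = a * eval s (lusP (p ^ n) y k)
  | 0, s => by simp [lusP]
  | k + 1, s => by
      rw [lusP_succ_eval, lusP_succ_eval, lusP_smul y a ha k s, mul_pow, ha]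
      ring

lemma lusP_eval_zero (y : ℕ → K) (k : ℕ) : eval (0 : K) (lusP (p ^ n) y k) = 0 := by
  have h := lusP_smul p n y 0 (by rw [zero_pow (lusfix_exp_ne_zero p n)]) k 0
  simpa using h

lemma lusP_sum (y : ℕ → K) (k : ℕ) {ι : Type*} (s : Finset ι) (f : ι → K) :
    eval (∑ i ∈ s, f i) (lusP (p ^ n) y k) = ∑ i ∈ s, eval (f i) (lusP (p ^ n) y k) := by
  classical
  induction s using Finset.cons_induction with
  | empty => simpa using lusP_eval_zero p n y k
  | cons i s his ih =>
      rw [Finset.sum_cons, Finset.sum_cons, lusP_add p n y k, ih]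

end CharLemmas

lemma lusP_natDegree {K : Type*} [Field K] (q : ℕ) (hq : 1 < q) (y : ℕ → K) :
    ∀ k, (∀ j < k, lusV q y j ≠ 0) →
      (lusP q y k).natDegree = q ^ k ∧ lusP q y k ≠ 0
  | 0, _ => by simp [lusP]
  | k + 1, hv => by
      have hv' : ∀ j < k, lusV q y j ≠ 0 := fun j hj => hv j (hj.trans (Nat.lt_succ_self k))
      obtain ⟨hdeg, hne⟩ := lusP_natDegree q hq y k hv'
      have hdegpow : (lusP q y k ^ q).natDegree = q ^ (k + 1) := by
        rw [Polynomial.natDegree_pow, hdeg, pow_succ']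
      have hlt : (lusP q y k).natDegree < (lusP q y k ^ q).natDegree := by
        rw [hdeg, hdegpow]
        exact Nat.pow_lt_pow_succ hq
      have hsubdeg : (lusP q y k ^ q - lusP q y k).natDegree = q ^ (k + 1) := by
        rw [Polynomial.natDegree_sub_eq_left_of_natDegree_lt hlt, hdegpow]
      have hsubne : lusP q y k ^ q - lusP q y k ≠ 0 := by
        intro h
        have h2 : (lusP q y k ^ q).natDegree = (lusP q y k).natDegree := by
          rw [sub_eq_zero.mp h]
      
        omega
      have hC : (C ((lusV q y k)⁻¹) : K[X]) ≠ 0 := by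
        rw [Ne, Polynomial.C_eq_zero, inv_eq_zero]
        exact hv k (Nat.lt_succ_self k)
      constructor
      · show (C ((lusV q y k)⁻¹) * (lusP q y k ^ q - lusP q y k)).natDegree = q ^ (k + 1)
        rw [Polynomial.natDegree_mul hC hsubne, Polynomial.natDegree_C, hsubdeg, zero_add]
      · exact mul_ne_zero hC hsubne

/-- Fixed points of `x ↦ x^(q^j)` when `x^q = x`. -/
lemma pow_pow_fixed {K : Type*} [Field K] (q : ℕ) (a : K) (ha : a ^ q = a) :
    ∀ j : ℕ, a ^ q ^ j = a
  | 0 => pow_one a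
  | j + 1 => by rw [pow_succ, pow_mul, pow_pow_fixed q a ha j, ha]

/-- Linear independence over `F_q` of the rows of a nonsingular Moore matrix. -/
lemma moore_indep {K : Type*} [Field K] (p n d : ℕ) [Fact p.Prime] [CharP K p]
    (x : Fin d → K)
    (hM : Matrix.det (Matrix.of fun i j : Fin d => x i ^ (p ^ n) ^ (j : ℕ)) ≠ 0)
    (a : Fin d → K) (ha : ∀ i, a i ^ p ^ n = a i) (hsum : ∑ i, a i * x i = 0) :
    ∀ i, a i = 0 := by
  by_contra h
  push_neg at h
  obtain ⟨i₀, hi₀⟩ := h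
  apply hM
  rw [← Matrix.exists_vecMul_eq_zero_iff]
  refine ⟨a, fun h0 => hi₀ (by rw [h0]; rfl), ?_⟩
  funext j
  have hpow : ∀ i : Fin d, a i * x i ^ (p ^ n) ^ (j : ℕ) = (a i * x i) ^ (p ^ n) ^ (j : ℕ) := by
    intro i
    rw [mul_pow, pow_pow_fixed (p ^ n) (a i) (ha i) (j : ℕ)]
  have h1 : Matrix.vecMul a (Matrix.of fun i j : Fin d => x i ^ (p ^ n) ^ (j : ℕ)) j
      = ∑ i, (a i * x i) ^ (p ^ n) ^ (j : ℕ) := by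
    simp only [Matrix.vecMul, dotProduct, Matrix.of_apply]
    exact Finset.sum_congr rfl fun i _ => hpow i
  rw [h1, Pi.zero_apply]
  have hpm : (p ^ n) ^ (j : ℕ) = p ^ (n * (j : ℕ)) := (pow_mul p n (j : ℕ)).symm
  simp_rw [hpm]
  rw [← sum_pow_char_pow, hsum, zero_pow (pow_ne_zero _ (Fact.out : p.Prime).pos.ne')]

open scoped Classical in
/-- The set of `q`-th "Artin–Schreier" fixed points, as a finset of roots of `X^q - X`. -/
noncomputable def asFixed (K : Type*) [Field K] (q : ℕ) : Finset K :=
  (X ^ q - X : K[X]).roots.toFinset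

lemma asFixed_natDegree {K : Type*} [Field K] (q : ℕ) (hq : 1 < q) :
    (X ^ q - X : K[X]).natDegree = q := by
  have h : (X : K[X]).natDegree < ((X : K[X]) ^ q).natDegree := by
    rw [natDegree_X, natDegree_X_pow]; exact hq
  rw [Polynomial.natDegree_sub_eq_left_of_natDegree_lt h, natDegree_X_pow]

lemma asFixed_poly_ne_zero {K : Type*} [Field K] (q : ℕ) (hq : 1 < q) :
    (X ^ q - X : K[X]) ≠ 0 :=
  Polynomial.ne_zero_of_natDegree_gt (n := 0) (by rw [asFixed_natDegree q hq]; omega)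

lemma mem_asFixed {K : Type*} [Field K] (q : ℕ) (hq : 1 < q) (a : K) :
    a ∈ asFixed K q ↔ a ^ q = a := by
  classical
  rw [asFixed]
  rw [Multiset.mem_toFinset, Polynomial.mem_roots (asFixed_poly_ne_zero q hq)]
  simp [Polynomial.IsRoot, sub_eq_zero]

lemma asFixed_card {K : Type*} [Field K] [IsAlgClosed K] (p n : ℕ) [Fact p.Prime]
    [CharP K p] (hn : 0 < n) : (asFixed K (p ^ n)).card = p ^ n := by
  have hq : 1 < p ^ n := Nat.one_lt_pow hn.ne' (Fact.out : p.Prime).one_lt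
  have hsep : ((X : K[X]) ^ p ^ n - X).Separable :=
    galois_poly_separable p (p ^ n) (dvd_pow_self p hn.ne')
  have hnodup := nodup_roots hsep
  classical
  rw [asFixed]
  rw [Multiset.toFinset_card_of_nodup hnodup,
    Polynomial.splits_iff_card_roots.mp (IsAlgClosed.splits _),
    asFixed_natDegree _ hq]

set_option maxHeartbeats 1600000 in
/-- The main non-vanishing lemma: under the Moore nonsingularity condition, the constants
`v_k` of the Lusztig recursion are nonzero. -/
lemma lusV_ne_zero {K : Type*} [Field K] [IsAlgClosed K] (p n d : ℕ) [Fact p.Prime]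
    [CharP K p] (hn : 0 < n) (hd : 0 < d) (x : Fin d → K)
    (hx1 : x ⟨d - 1, Nat.sub_lt hd Nat.one_pos⟩ = 1)
    (hM : Matrix.det (Matrix.of fun i j : Fin d => x i ^ (p ^ n) ^ (j : ℕ)) ≠ 0) :
    ∀ k, k + 2 ≤ d → lusV (p ^ n) (fun j => x ⟨d - 1 - j, by omega⟩) k ≠ 0 := by
  classical
  intro k
  induction k using Nat.strong_induction_on with
  | _ k IH =>
  intro hk
  have hq : 1 < p ^ n := Nat.one_lt_pow hn.ne' (Fact.out : p.Prime).one_lt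
  set y : ℕ → K := fun j => x ⟨d - 1 - j, by omega⟩ with hy
  have hy0 : y 0 = 1 := hx1
  have hv' : ∀ j < k, lusV (p ^ n) y j ≠ 0 := fun j hj => IH j hj (by omega)
  intro h0
  -- `t` is a fixed point of Frobenius
  set t : K := eval (y (k + 1)) (lusP (p ^ n) y k) with ht
  have htq : t ^ p ^ n = t := by
    have h : t ^ p ^ n - t = 0 := h0
    exact sub_eq_zero.mp h
  -- the extra root
  set z : K := y (k + 1) - t * y k with hz
  have hzroot : eval z (lusP (p ^ n) y k) = 0 := by
    have hneg : (-t) ^ p ^ n = -t := lusfix_neg p n htq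
    have hze : z = y (k + 1) + -t * y k := by rw [hz]; ring
    rw [hze, lusP_add p n y k, lusP_smul p n y (-t) hneg k,
      lusP_diag (p ^ n) y hy0 k hv', ← ht]
    ring
  -- positions of the known roots
  set w : Fin (k + 1) → K := fun j => if j = Fin.last k then z else y j with hw
  have hwroot : ∀ j : Fin (k + 1), eval (w j) (lusP (p ^ n) y k) = 0 := by
    intro j
    by_cases hjk : j = Fin.last k
    · subst hjk
      rw [hw]
      simp only [if_pos rfl]
      exact hzroot
    · have hjlt : (j : ℕ) < k := Fin.val_lt_last hjk
      rw [hw]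
      simp only [if_neg hjk]
      exact lusP_zero_of_lt (p ^ n) (by omega) y hy0 k hv' j hjlt
  -- the injection from tuples of Frobenius fixed points into roots of `lusP`
  set S : Finset K := asFixed K (p ^ n) with hS
  have hmemS : ∀ a : ↥S, (a : K) ^ p ^ n = a := fun a => (mem_asFixed (p ^ n) hq _).mp a.2
  set g : (Fin (k + 1) → ↥S) → K := fun a => ∑ j, (a j : K) * w j with hg
  have hgroot : ∀ a, eval (g a) (lusP (p ^ n) y k) = 0 := by
    intro a
    rw [hg]
    simp only
    rw [lusP_sum p n y k]
    refine Finset.sum_eq_zero fun j _ => ?_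
    rw [lusP_smul p n y _ (hmemS (a j)) k, hwroot j, mul_zero]
  -- index embedding into `Fin d`
  set e : Fin (k + 1) → Fin d := fun j =>
    if j = Fin.last k then ⟨d - 2 - k, by omega⟩ else ⟨d - 1 - (j : ℕ), by omega⟩ with he
  have heval : ∀ j : Fin (k + 1), ((e j : Fin d) : ℕ) =
      if j = Fin.last k then d - 2 - k else d - 1 - (j : ℕ) := by
    intro j
    rw [he]
    by_cases hjk : j = Fin.last k
    · simp only [if_pos hjk]
    · simp only [if_neg hjk]
  have heinj : Function.Injective e := by
    intro j j' hjj'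
    have h1 := heval j
    have h2 := heval j'
    rw [hjj'] at h1
    by_cases hj : j = Fin.last k <;> by_cases hj' : j' = Fin.last k
    · rw [hj, hj']
    · exfalso
      have hlt' : (j' : ℕ) < k := Fin.val_lt_last hj'
      rw [if_pos hj] at h1
      rw [if_neg hj'] at h2
      omega
    · exfalso
      have hlt : (j : ℕ) < k := Fin.val_lt_last hj
      rw [if_neg hj] at h1
      rw [if_pos hj'] at h2
      omega
    · have hlt : (j : ℕ) < k := Fin.val_lt_last hj
      have hlt' : (j' : ℕ) < k := Fin.val_lt_last hj'
      rw [if_neg hj] at h1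
      rw [if_neg hj'] at h2
      exact Fin.ext (by omega)
  -- relation between `w` and `x ∘ e`
  have hwx : ∀ j : Fin (k + 1), w j = x (e j) -
      (if j = Fin.last k then t * y k else 0) := by
    intro j
    by_cases hjk : j = Fin.last k
    · subst hjk
      have hxe : x (⟨d - 2 - k, by omega⟩ : Fin d) = y (k + 1) :=
        congrArg x (fin_mk_eq _ _ (by omega))
      have h1 : w (Fin.last k) = z := by rw [hw]; simp
      have h2 : e (Fin.last k) = ⟨d - 2 - k, by omega⟩ := by rw [he]; simp
      rw [h1, h2, if_pos rfl, hxe, hz]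
    · rw [hw, he]
      simp only [if_neg hjk, sub_zero]
      rfl
  have hginj : Function.Injective g := by
    intro a a' haa'
    set c : Fin (k + 1) → K := fun j => (a j : K) - (a' j : K) with hc
    have hcsum : ∑ j, c j * w j = 0 := by
      have h : ∑ j, c j * w j = g a - g a' := by
        rw [hg, hc]
        simp only
        rw [← Finset.sum_sub_distrib]
        exact Finset.sum_congr rfl fun j _ => by ring
      rw [h, haa', sub_self]
    have hcq : ∀ j, c j ^ p ^ n = c j :=
      fun j => lusfix_sub p n (hmemS (a j)) (hmemS (a' j))
    -- the coefficient vector on `Fin d`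
    set b : Fin d → K := fun i =>
      (∑ j, if e j = i then c j else 0) +
        (if i = ⟨d - 1 - k, by omega⟩ then -(c (Fin.last k) * t) else 0) with hb
    have hbq : ∀ i, b i ^ p ^ n = b i := by
      intro i
      rw [hb]
      simp only
      refine lusfix_add p n ?_ ?_
      · refine lusfix_sum p n _ _ fun j _ => ?_
        by_cases hji : e j = i
        · rw [if_pos hji]; exact hcq j
        · rw [if_neg hji]; exact zero_pow (lusfix_exp_ne_zero p n)
      · by_cases hik : i = ⟨d - 1 - k, by omega⟩
        · rw [if_pos hik]
          exact lusfix_neg p n (lusfix_mul p n (hcq _) htq)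
        · rw [if_neg hik]; exact zero_pow (lusfix_exp_ne_zero p n)
    have hyk : y k = x ⟨d - 1 - k, by omega⟩ := rfl
    have hbsum : ∑ i, b i * x i = 0 := by
      rw [hb]
      simp only [add_mul]
      rw [Finset.sum_add_distrib]
      have hinner : ∀ j : Fin (k + 1),
          ∑ i, (if e j = i then c j else 0) * x i = c j * x (e j) := by
        intro j
        rw [Finset.sum_eq_single (e j)]
        · rw [if_pos rfl]
        · intro i _ hi
          rw [if_neg fun h => hi h.symm, zero_mul]
        · intro h; exact absurd (Finset.mem_univ _) h
      have h1 : ∑ i, (∑ j, if e j = i then c j else 0) * x i = ∑ j, c j * x (e j) := by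
        calc ∑ i, (∑ j, if e j = i then c j else 0) * x i
            = ∑ i, ∑ j, (if e j = i then c j else 0) * x i :=
              Finset.sum_congr rfl fun i _ => Finset.sum_mul ..
          _ = ∑ j, ∑ i, (if e j = i then c j else 0) * x i := Finset.sum_comm
          _ = ∑ j, c j * x (e j) := Finset.sum_congr rfl fun j _ => hinner j
      have h2 : ∑ i, (if i = (⟨d - 1 - k, by omega⟩ : Fin d)
            then -(c (Fin.last k) * t) else 0) * x i
          = -(c (Fin.last k) * t) * x ⟨d - 1 - k, by omega⟩ := by
        rw [Finset.sum_eq_single (⟨d - 1 - k, by omega⟩ : Fin d)]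
        · rw [if_pos rfl]
        · intro i _ hi
          rw [if_neg hi, zero_mul]
        · intro h; exact absurd (Finset.mem_univ _) h
      rw [h1, h2]
      have h3 : ∀ j : Fin (k + 1), c j * x (e j) =
          c j * w j + (if j = Fin.last k then c (Fin.last k) * (t * y k) else 0) := by
        intro j
        rw [hwx j]
        by_cases hjk : j = Fin.last k
        · subst hjk
          rw [if_pos rfl, if_pos rfl]
          ring
        · rw [if_neg hjk, if_neg hjk]
          ring
      rw [Finset.sum_congr rfl fun j _ => h3 j, Finset.sum_add_distrib, hcsum, zero_add]
      have h4 : ∑ j : Fin (k + 1), (if j = Fin.last k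
            then c (Fin.last k) * (t * y k) else 0)
          = c (Fin.last k) * (t * y k) := by
        rw [Finset.sum_eq_single (Fin.last k)]
        · rw [if_pos rfl]
        · intro j _ hj
          rw [if_neg hj]
        · intro h; exact absurd (Finset.mem_univ _) h
      rw [h4, hyk]
      ring
    have hb0 : ∀ i, b i = 0 := moore_indep p n d x hM b hbq hbsum
    have hcj : ∀ j : Fin (k + 1), c j = 0 := by
      intro j
      have hbe := hb0 (e j)
      rw [hb] at hbe
      simp only at hbe
      have hsum1 : (∑ j', if e j' = e j then c j' else 0) = c j := by
        rw [Finset.sum_eq_single j]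
        · rw [if_pos rfl]
        · intro j' _ hj'
          rw [if_neg fun h => hj' (heinj h)]
        · intro h; exact absurd (Finset.mem_univ _) h
      have hne : e j ≠ ⟨d - 1 - k, by omega⟩ := by
        intro h
        have hv := heval j
        rw [h] at hv
        by_cases hjk : j = Fin.last k
        · rw [if_pos hjk] at hv
          simp only [Fin.val_mk] at hv
          omega
        · have hlt : (j : ℕ) < k := Fin.val_lt_last hjk
          rw [if_neg hjk] at hv
          simp only [Fin.val_mk] at hv
          omega
      rw [hsum1, if_neg hne, add_zero] at hbe
      exact hbe
    funext j
    have hj := hcj j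
    rw [hc] at hj
    simp only at hj
    exact Subtype.ext (sub_eq_zero.mp hj)
  -- counting roots
  obtain ⟨hPdeg, hPne⟩ := lusP_natDegree (p ^ n) hq y k hv'
  set T : Finset K := (lusP (p ^ n) y k).roots.toFinset with hT
  have hgT : ∀ a, g a ∈ T := by
    intro a
    rw [hT, Multiset.mem_toFinset, Polynomial.mem_roots hPne]
    exact hgroot a
  set g' : (Fin (k + 1) → ↥S) → ↥T := fun a => ⟨g a, hgT a⟩ with hg'
  have hg'inj : Function.Injective g' := fun a a' h => hginj (congrArg Subtype.val h)
  have hcard := Fintype.card_le_of_injective g' hg'inj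
  rw [Fintype.card_fun, Fintype.card_coe, Fintype.card_coe, Fintype.card_fin, hS,
    asFixed_card p n hn] at hcard
  have hTcard : T.card ≤ (p ^ n) ^ k := by
    calc T.card ≤ Multiset.card (lusP (p ^ n) y k).roots := Multiset.toFinset_card_le _
    _ ≤ (lusP (p ^ n) y k).natDegree := Polynomial.card_roots' _
    _ = (p ^ n) ^ k := hPdeg
  have hlt : (p ^ n) ^ k < (p ^ n) ^ (k + 1) := Nat.pow_lt_pow_succ hq
  omega

set_option maxHeartbeats 8000000 in
/-- Uniqueness: the Lusztig recursion determines each column of `u` from the last one. -/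
lemma lusztig_unique_col {K : Type*} [Field K] (p n d : ℕ) [Fact p.Prime] [CharP K p]
    (hd : 0 < d) (x : Fin d → K)
    (hvall : ∀ k, k + 2 ≤ d → lusV (p ^ n) (fun j => x ⟨d - 1 - j, by omega⟩) k ≠ 0)
    (u : Matrix (Fin d) (Fin d) K)
    (hurec : ∀ i : ℕ, ∀ _ : 1 ≤ i, ∀ _ : i ≤ d - 1,
      ∀ r : Fin d,
        (u r ⟨d - i, by omega⟩) ^ (p ^ n) - u r ⟨d - i, by omega⟩ =
          ((u ⟨d - i - 1, by omega⟩ ⟨d - i, by omega⟩) ^ (p ^ n) -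
              u ⟨d - i - 1, by omega⟩ ⟨d - i, by omega⟩) * u r ⟨d - i - 1, by omega⟩)
    (hulast : ∀ r : Fin d, u r ⟨d - 1, Nat.sub_lt hd Nat.one_pos⟩ = x r) :
    ∀ k, k ≤ d - 1 → ∀ r : Fin d,
      u r ⟨d - 1 - k, by omega⟩ =
        eval (x r) (lusP (p ^ n) (fun j => x ⟨d - 1 - j, by omega⟩) k) := by
  set y : ℕ → K := fun j => x ⟨d - 1 - j, by omega⟩ with hy
  intro k
  induction k with
  | zero =>
    intro _ r
    have h : (⟨d - 1 - 0, by omega⟩ : Fin d) = ⟨d - 1, by omega⟩ := fin_mk_eq _ _ rfl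
    rw [h, hulast r]
    simp [lusP]
  | succ k IH =>
    intro hk r
    have IH' := IH (by omega)
    have hrec' := hurec (k + 1) (by omega) (by omega)
    have hcol : (⟨d - (k + 1), by omega⟩ : Fin d) = ⟨d - 1 - k, by omega⟩ :=
      fin_mk_eq _ _ (by omega)
    have hrowv : (⟨d - (k + 1) - 1, by omega⟩ : Fin d) = ⟨d - 1 - (k + 1), by omega⟩ :=
      fin_mk_eq _ _ (by omega)
    have hxv : x ⟨d - 1 - (k + 1), by omega⟩ = y (k + 1) := rfl
    have hveq : (u ⟨d - (k + 1) - 1, by omega⟩ ⟨d - (k + 1), by omega⟩) ^ (p ^ n) -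
        u ⟨d - (k + 1) - 1, by omega⟩ ⟨d - (k + 1), by omega⟩ = lusV (p ^ n) y k := by
      rw [hcol, hrowv, IH' ⟨d - 1 - (k + 1), by omega⟩, hxv]
      rfl
    have h1 := hrec' r
    rw [hveq, hcol, IH' r] at h1
    have hvk : lusV (p ^ n) y k ≠ 0 := hvall k (by omega)
    have h2 : eval (x r) (lusP (p ^ n) y k) ^ (p ^ n) - eval (x r) (lusP (p ^ n) y k) =
        lusV (p ^ n) y k * eval (x r) (lusP (p ^ n) y (k + 1)) := by
      rw [lusP_succ_eval, ← mul_assoc, mul_inv_cancel₀ hvk, one_mul]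
    rw [h2] at h1
    have h3 := mul_left_cancel₀ hvk h1
    rw [← hrowv, ← h3]

/-- The Lusztig conditions on an upper unitriangular `d × d` matrix `u` (the set `X'(c)`):
writing `u_i` for the `(d+1-i)`-th column, for each `1 ≤ i ≤ d-1` one has
`v_i := u_{d-i,i}^q - u_{d-i,i} ≠ 0` and `F(u_i) - u_i = v_i • u_{i+1}`. -/
def LusztigCond (q d : ℕ) {K : Type*} [Field K] (u : Matrix (Fin d) (Fin d) K) : Prop :=
  (∀ r c : Fin d, (c : ℕ) < (r : ℕ) → u r c = 0) ∧
  (∀ r : Fin d, u r r = 1) ∧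
  ∀ i : ℕ, ∀ _ : 1 ≤ i, ∀ _ : i ≤ d - 1,
    ((u ⟨d - i - 1, by omega⟩ ⟨d - i, by omega⟩) ^ q -
        u ⟨d - i - 1, by omega⟩ ⟨d - i, by omega⟩ ≠ 0) ∧
    ∀ r : Fin d,
      (u r ⟨d - i, by omega⟩) ^ q - u r ⟨d - i, by omega⟩ =
        ((u ⟨d - i - 1, by omega⟩ ⟨d - i, by omega⟩) ^ q -
            u ⟨d - i - 1, by omega⟩ ⟨d - i, by omega⟩) * u r ⟨d - i - 1, by omega⟩

set_option maxHeartbeats 1600000 in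
/-- **The Lusztig isomorphism in coordinates.**  For `u ∈ X'(c)`, the first column of
`u·w_Δ` (the homogeneous coordinates of `L(u) = u w_Δ B` under the identification
`X(c) ≅ Ω^{d-1}`) is exactly the last column `(u_{1,1},…,u_{d-1,1},1)ᵗ` of `u`;
conversely the inverse of `L` sends a point `(x_0,…,x_{d-2})` of `Ω^{d-1}` (i.e. with
nonvanishing Moore determinant of `(x_0,…,x_{d-2},1)`) to the *unique* `u ∈ X'(c)` whose
last column is `(x_0,…,x_{d-2},1)ᵗ`. -/
theorem lusztig_iso_coordinates
    (p n d : ℕ) [Fact p.Prime] (hn : 0 < n) (hd : 0 < d)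
    (K : Type*) [Field K] [IsAlgClosed K] [CharP K p] [Algebra (GaloisField p n) K] :
    (∀ u : Matrix (Fin d) (Fin d) K, LusztigCond (p ^ n) d u →
      ∀ r : Fin d,
        (u * Matrix.of fun i j : Fin d => if (i : ℕ) + (j : ℕ) = d - 1 then (1 : K) else 0)
            r ⟨0, hd⟩ = u r ⟨d - 1, by omega⟩) ∧
    (∀ x : Fin d → K, x ⟨d - 1, by omega⟩ = 1 →
      Matrix.det (Matrix.of fun i j : Fin d => x i ^ (p ^ n) ^ (j : ℕ)) ≠ 0 →
        ∃! u : Matrix (Fin d) (Fin d) K,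
          LusztigCond (p ^ n) d u ∧ ∀ r : Fin d, u r ⟨d - 1, by omega⟩ = x r) := by
  constructor
  · -- first part: multiplication by the antidiagonal matrix
    intro u _ r
    rw [Matrix.mul_apply]
    rw [Finset.sum_eq_single (⟨d - 1, by omega⟩ : Fin d)]
    · simp
    · intro j _ hj
      simp only [Matrix.of_apply, Fin.val_mk, Nat.add_zero]
      rw [if_neg fun hval => hj (Fin.ext hval), mul_zero]
    · intro h; exact absurd (Finset.mem_univ _) h
  · -- second part: existence and uniqueness
    intro x hx1 hM
    classical
    have hq : 1 < p ^ n := Nat.one_lt_pow hn.ne' (Fact.out : p.Prime).one_lt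
    set y : ℕ → K := fun j => x ⟨d - 1 - j, by omega⟩ with hy
    have hy0 : y 0 = 1 := hx1
    have hvall : ∀ k, k + 2 ≤ d → lusV (p ^ n) y k ≠ 0 :=
      lusV_ne_zero p n d hn hd x hx1 hM
    have hvlt : ∀ k, k ≤ d - 1 → ∀ j < k, lusV (p ^ n) y j ≠ 0 :=
      fun k hk j hj => hvall j (by omega)
    -- the candidate matrix
    set u₀ : Matrix (Fin d) (Fin d) K :=
      Matrix.of (fun r c => eval (x r) (lusP (p ^ n) y (d - 1 - (c : ℕ)))) with hu₀
    have hu₀app : ∀ r c : Fin d, u₀ r c = eval (x r) (lusP (p ^ n) y (d - 1 - (c : ℕ))) :=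
      fun r c => rfl
    have hxy : ∀ r : Fin d, x r = y (d - 1 - (r : ℕ)) := by
      intro r
      exact congrArg x (Fin.ext (by simp; omega))
    -- last column of u₀
    have hu₀last : ∀ r : Fin d, u₀ r ⟨d - 1, by omega⟩ = x r := by
      intro r
      rw [hu₀app]
      have h : d - 1 - ((⟨d - 1, by omega⟩ : Fin d) : ℕ) = 0 := by simp
      rw [h]
      simp [lusP]
    -- u₀ satisfies the Lusztig conditions
    have hcond : LusztigCond (p ^ n) d u₀ := by
      refine ⟨?_, ?_, ?_⟩
      · -- strictly lower triangular entries vanish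
        intro r c hrc
        rw [hu₀app, hxy r]
        exact lusP_zero_of_lt (p ^ n) (by omega) y hy0 (d - 1 - (c : ℕ))
          (hvlt _ (by omega)) (d - 1 - (r : ℕ)) (by omega)
      · -- diagonal entries are 1
        intro r
        rw [hu₀app, hxy r]
        exact lusP_diag (p ^ n) y hy0 (d - 1 - (r : ℕ)) (hvlt _ (by omega))
      · -- the recursion
        intro i hi1 hi2
        have hkey : ∀ r : Fin d, u₀ r ⟨d - i, by omega⟩
            = eval (x r) (lusP (p ^ n) y (i - 1)) := by
          intro r
          rw [hu₀app]
          congr 2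
          simp only [Fin.val_mk]
          omega
        have hventry : u₀ ⟨d - i - 1, by omega⟩ ⟨d - i, by omega⟩ =
            eval (y i) (lusP (p ^ n) y (i - 1)) := by
          rw [hkey ⟨d - i - 1, by omega⟩]
          congr 1
          rw [hxy ⟨d - i - 1, by omega⟩]
          congr 1
          simp only [Fin.val_mk]
          omega
        have hveq : (u₀ ⟨d - i - 1, by omega⟩ ⟨d - i, by omega⟩) ^ (p ^ n) -
            u₀ ⟨d - i - 1, by omega⟩ ⟨d - i, by omega⟩ = lusV (p ^ n) y (i - 1) := by
          rw [hventry, lusV]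
          have h : i - 1 + 1 = i := by omega
          rw [h]
        have hvne : lusV (p ^ n) y (i - 1) ≠ 0 := hvall (i - 1) (by omega)
        refine ⟨by rw [hveq]; exact hvne, ?_⟩
        intro r
        rw [hveq, hkey r]
        have hkey2 : u₀ r ⟨d - i - 1, by omega⟩ = eval (x r) (lusP (p ^ n) y i) := by
          rw [hu₀app]
          congr 2
          simp only [Fin.val_mk]
          omega
        rw [hkey2]
        have hi0 : i = (i - 1) + 1 := by omega
        have h2 : eval (x r) (lusP (p ^ n) y i) =
            (lusV (p ^ n) y (i - 1))⁻¹ * (eval (x r) (lusP (p ^ n) y (i - 1)) ^ (p ^ n) -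
              eval (x r) (lusP (p ^ n) y (i - 1))) := by
          conv_lhs => rw [hi0]
          rw [lusP_succ_eval]
        rw [h2, ← mul_assoc, mul_inv_cancel₀ hvne, one_mul]
    refine ⟨u₀, ⟨hcond, hu₀last⟩, ?_⟩
    -- uniqueness
    rintro u ⟨⟨hutri, hudiag, hurec⟩, hulast⟩
    have key : ∀ k, k ≤ d - 1 → ∀ r : Fin d,
        u r ⟨d - 1 - k, by omega⟩ = eval (x r) (lusP (p ^ n) y k) :=
      lusztig_unique_col p n d hd x hvall u (fun i hi1 hi2 => (hurec i hi1 hi2).2) hulast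
    ext r c
    have hc : c = ⟨d - 1 - (d - 1 - (c : ℕ)), by omega⟩ := Fin.ext (by simp; omega)
    rw [hu₀app]
    calc u r c = u r ⟨d - 1 - (d - 1 - (c : ℕ)), by omega⟩ := by rw [← hc]
    _ = eval (x r) (lusP (p ^ n) y (d - 1 - (c : ℕ))) := key (d - 1 - (c : ℕ)) (by omega) r
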